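/- arXiv:1612.06786 — 5 statements merged into one kernel-verified Lean document; each statement's English description precedes it below -/
import Mathlib

section
/- If φ satisfies 2π/3 < φ ≤ 2π/3 + 2π/7, then sin(φ) + sin(2φ) < 0. -/
open Real

theorem stmt_0 (φ : ℝ) (h1 : 2 * π / 3 < φ) (h2 : φ ≤ 2 * π / 3 + 2 * π / 7) :
    Real.sin φ + Real.sin (2 * φ) < 0 := by
  have hπ : (0:ℝ) < π := Real.pi_pos
  have hφ0 : 0 < φ := lt_trans (by positivity) h1
  have hφπ : φ < π := lt_of_le_of_lt h2 (by nlinarith)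
  have hsin : 0 < Real.sin φ := Real.sin_pos_of_pos_of_lt_pi hφ0 hφπ
  have hcos : Real.cos φ < Real.cos (2 * π / 3) := by
    apply Real.cos_lt_cos_of_nonneg_of_le_pi (by positivity) hφπ.le h1
  have hval : Real.cos (2 * π / 3) = -(1/2) := by
    rw [show (2:ℝ) * π / 3 = π - π / 3 by ring, Real.cos_pi_sub, Real.cos_pi_div_three]
  rw [Real.sin_two_mul]
  nlinarith
end

section
/- If φ satisfies 2π/3 < φ ≤ 2π/3 + 2π/7, then (sin φ + sin 2φ + sin 3φ) − ((1 + cos φ + cos 2φ + cos 3φ)·tan φ − tan φ) > 0. -/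
open Real

theorem stmt_5 (φ : ℝ) (h1 : 2 * π / 3 < φ) (h2 : φ ≤ 2 * π / 3 + 2 * π / 7) :
    (Real.sin φ + Real.sin (2 * φ) + Real.sin (3 * φ)) -
      ((1 + Real.cos φ + Real.cos (2 * φ) + Real.cos (3 * φ)) * Real.tan φ - Real.tan φ) > 0 := by
  have hπ : (0:ℝ) < π := Real.pi_pos
  have hφπ : φ < π := by linarith [h2]
  have hφ0 : 0 < φ := by linarith
  have hs : 0 < Real.sin φ := Real.sin_pos_of_pos_of_lt_pi hφ0 hφπ
  have hc : Real.cos φ < 0 := by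
    apply Real.cos_neg_of_pi_div_two_lt_of_lt <;> linarith
  have hc0 : Real.cos φ ≠ 0 := ne_of_lt hc
  have hcos23 : Real.cos (2 * π / 3) = -(1/2) := by
    rw [show (2 * π / 3 : ℝ) = π - π / 3 by ring, Real.cos_pi_sub, Real.cos_pi_div_three]
  have hclt : Real.cos φ < -(1/2) := by
    rw [← hcos23]
    apply Real.cos_lt_cos_of_nonneg_of_le_pi (by positivity) (le_of_lt hφπ) h1
  have key : (Real.sin φ + Real.sin (2 * φ) + Real.sin (3 * φ)) -
      ((1 + Real.cos φ + Real.cos (2 * φ) + Real.cos (3 * φ)) * Real.tan φ - Real.tan φ)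
      = Real.sin φ * (1 + 2 * Real.cos φ) / Real.cos φ := by
    rw [Real.tan_eq_sin_div_cos, Real.sin_two_mul, Real.cos_two_mul,
      Real.sin_three_mul, Real.cos_three_mul]
    field_simp
    linear_combination (-4 * Real.cos φ) * Real.sin_sq_add_cos_sq φ
  rw [key]
  have h1p : Real.sin φ * (1 + 2 * Real.cos φ) < 0 := by nlinarith
  exact div_pos_of_neg_of_neg h1p hc
end

section
/- Let n ≥ 7 and φ = 2π(⌊n/3⌋+1)/n. Define points P₀=(0,0), P₁=(1,0), P₂=P₁+(cos φ, sin φ), P₃=P₂+(cos 2φ, sin 2φ), P₄=P₃+(cos 3φ, sin 3φ). Then the open segment P₂P₃ intersects the open segment P₀P₁. -/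
open Real

theorem stmt_14 (n : ℕ) (hn : 7 ≤ n) :
    let φ : ℝ := 2 * π * ((⌊(n : ℝ) / 3⌋ : ℝ) + 1) / n
    let P0 : ℝ × ℝ := (0, 0)
    let P1 : ℝ × ℝ := (1, 0)
    let P2 : ℝ × ℝ := P1 + (Real.cos φ, Real.sin φ)
    let P3 : ℝ × ℝ := P2 + (Real.cos (2 * φ), Real.sin (2 * φ))
    (openSegment ℝ P2 P3 ∩ openSegment ℝ P0 P1).Nonempty := by
  intro φ P0 P1 P2 P3
  have hπ := Real.pi_pos
  have hn7 : (7:ℝ) ≤ (n:ℝ) := by exact_mod_cast hn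
  have hn0 : (0:ℝ) < (n:ℝ) := by linarith
  have hk1 : (n:ℝ)/3 < (⌊(n:ℝ)/3⌋ : ℝ) + 1 := Int.lt_floor_add_one _
  have hk2 : ((⌊(n:ℝ)/3⌋ : ℤ) : ℝ) ≤ (n:ℝ)/3 := Int.floor_le _
  have hφ1 : 2*π/3 < φ := by
    show 2*π/3 < 2 * π * ((⌊(n : ℝ) / 3⌋ : ℝ) + 1) / n
    rw [lt_div_iff₀ hn0]
    nlinarith [mul_pos hπ hn0]
  have hφ2 : φ < π := by
    show 2 * π * ((⌊(n : ℝ) / 3⌋ : ℝ) + 1) / n < π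
    rw [div_lt_iff₀ hn0]
    nlinarith [mul_pos hπ hn0]
  have hφ0 : 0 < φ := by nlinarith
  have hs : 0 < Real.sin φ := Real.sin_pos_of_pos_of_lt_pi hφ0 hφ2
  have hcv : Real.cos (2*π/3) = -(1/2) := by
    rw [show (2*π/3 : ℝ) = π - π/3 by ring, Real.cos_pi_sub, Real.cos_pi_div_three]
  have hc2 : Real.cos φ < -(1/2) := by
    have h := Real.cos_lt_cos_of_nonneg_of_le_pi (by positivity) (le_of_lt hφ2) hφ1
    rwa [hcv] at h
  have hc1 : -1 < Real.cos φ := by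
    have h := Real.cos_lt_cos_of_nonneg_of_le_pi (le_of_lt hφ0) le_rfl hφ2
    rwa [Real.cos_pi] at h
  set c := Real.cos φ with hc
  have hcne : c ≠ 0 := by nlinarith
  have h2c : 2*c < -1 := by linarith
  have hcos2 : Real.cos (2*φ) = 2*c^2 - 1 := by
    rw [Real.cos_two_mul]
  have hsin2 : Real.sin (2*φ) = 2 * Real.sin φ * c := Real.sin_two_mul φ
  refine ⟨(1 + 1/(2*c), 0), ⟨1 - (-1/(2*c)), -1/(2*c), ?_, ?_, by ring, ?_⟩,
    ⟨1 - (1 + 1/(2*c)), 1 + 1/(2*c), ?_, ?_, by ring, ?_⟩⟩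
  · -- 0 < 1 - (-1/(2c))  i.e.  -1/(2c) < 1
    have h : -1/(2*c) < 1 := by
      rw [div_lt_iff_of_neg (by linarith : 2*c < 0)]
      linarith
    linarith
  · -- 0 < -1/(2c)
    exact div_pos_of_neg_of_neg (by norm_num) (by linarith)
  · show (1 - (-1/(2*c))) • P2 + (-1/(2*c)) • P3 = (1 + 1/(2*c), 0)
    simp only [P3, P2, P1, P0, Prod.mk_add_mk, Prod.smul_mk, smul_eq_mul, Prod.mk.injEq]
    rw [hcos2, hsin2]
    constructor
    · field_simp
      ring
    · field_simp
      ring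
  · -- 0 < 1 - (1 + 1/(2c)) i.e. 1/(2c) < 0
    have h : 1/(2*c) < 0 := div_neg_of_pos_of_neg one_pos (by linarith)
    linarith
  · -- 0 < 1 + 1/(2c)
    have h : -1 < 1/(2*c) := by
      rw [lt_div_iff_of_neg (by linarith : 2*c < 0)]
      linarith
    linarith
  · show (1 - (1 + 1/(2*c))) • P0 + (1 + 1/(2*c)) • P1 = (1 + 1/(2*c), 0)
    simp only [P0, P1, Prod.smul_mk, smul_eq_mul, Prod.mk_add_mk, Prod.mk.injEq]
    constructor <;> ring
end

section
/- Let φ ∈ (2π/3, 2π/3 + 2π/7]. Define P₀=(0,0), P₁=(1,0), P₂=P₁+(cos φ, sin φ), P₃=P₂+(cos 2φ, sin 2φ), P₄=P₃+(cos 3φ, sin 3φ). Then the open segment P₃P₄ intersects the open segment P₁P₂. -/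
open Real

theorem stmt_15 (φ : ℝ) (h1 : 2 * π / 3 < φ) (h2 : φ ≤ 2 * π / 3 + 2 * π / 7) :
    let P1 : ℝ × ℝ := (1, 0)
    let P2 : ℝ × ℝ := P1 + (Real.cos φ, Real.sin φ)
    let P3 : ℝ × ℝ := P2 + (Real.cos (2 * φ), Real.sin (2 * φ))
    let P4 : ℝ × ℝ := P3 + (Real.cos (3 * φ), Real.sin (3 * φ))
    (openSegment ℝ P3 P4 ∩ openSegment ℝ P1 P2).Nonempty := by
  intro P1 P2 P3 P4
  have hπ : (0:ℝ) < π := Real.pi_pos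
  have hφpos : 0 ≤ φ := by nlinarith
  have hφltπ : φ < π := by nlinarith
  have hc1 : Real.cos φ < -1/2 := by
    have := Real.cos_lt_cos_of_nonneg_of_le_pi (by positivity : (0:ℝ) ≤ 2*π/3)
      (le_of_lt hφltπ) h1
    rw [show (2*π/3 : ℝ) = π - π/3 by ring, Real.cos_pi_sub, Real.cos_pi_div_three] at this
    linarith
  have hc2 : -1 < Real.cos φ := by
    have := Real.cos_lt_cos_of_nonneg_of_le_pi hφpos (le_refl π) hφltπ
    rw [Real.cos_pi] at this; linarith
  set c := Real.cos φ with hc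
  have hc0 : c ≠ 0 := by intro h; rw [h] at hc1; linarith
  set s : ℝ := 1 + 1/(2*c) with hs
  set t : ℝ := -(1/(2*c)) with ht
  have hst : s + t = 1 := by rw [hs, ht]; ring
  have hspos : 0 < s := by
    rw [hs]
    have : 1/(2*c) > -1 := by
      rw [gt_iff_lt, lt_div_iff_of_neg (by linarith : 2*c < 0)]
      linarith
    linarith
  have htpos : 0 < t := by
    rw [ht]
    have : 1/(2*c) < 0 := div_neg_of_pos_of_neg one_pos (by linarith)
    linarith
  refine ⟨(1 + s*c, s * Real.sin φ), ⟨s, t, hspos, htpos, hst, ?_⟩,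
    ⟨t, s, htpos, hspos, by linarith, ?_⟩⟩
  · have hcos2 : Real.cos (2*φ) = 2*c^2 - 1 := by
      rw [Real.cos_two_mul]; try ring
    have hsin2 : Real.sin (2*φ) = 2 * Real.sin φ * c := by
      rw [Real.sin_two_mul]; try ring
    have hcos3 : Real.cos (3*φ) = 4*c^3 - 3*c := by
      rw [Real.cos_three_mul]; try ring
    have hsin3 : Real.sin (3*φ) = 3*Real.sin φ - 4*(Real.sin φ)^3 := by
      rw [Real.sin_three_mul]; try ring
    have hpyth : (Real.sin φ)^2 = 1 - c^2 := by
      have := Real.sin_sq_add_cos_sq φ; linarith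
    show (s • (((1:ℝ),(0:ℝ)) + (c, Real.sin φ) + (Real.cos (2*φ), Real.sin (2*φ)))
        + t • ((((1:ℝ),(0:ℝ)) + (c, Real.sin φ) + (Real.cos (2*φ), Real.sin (2*φ)))
          + (Real.cos (3*φ), Real.sin (3*φ)))) = (1 + s*c, s * Real.sin φ)
    rw [hcos2, hsin2, hcos3, hsin3]
    simp only [Prod.mk_add_mk, Prod.smul_mk, smul_eq_mul, Prod.mk.injEq]
    constructor
    · rw [hs, ht]; field_simp; ring
    · rw [hs, ht]
      have h3 : (Real.sin φ)^3 = Real.sin φ * (1 - c^2) := by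
        rw [show (Real.sin φ)^3 = Real.sin φ * (Real.sin φ)^2 by ring, hpyth]
      rw [h3]; field_simp; ring
  · show (t • ((1:ℝ),(0:ℝ)) + s • (((1:ℝ),(0:ℝ)) + (c, Real.sin φ))) = (1 + s*c, s * Real.sin φ)
    simp only [Prod.mk_add_mk, Prod.smul_mk, smul_eq_mul, Prod.mk.injEq]
    constructor
    · rw [hs, ht]; field_simp; ring
    · ring
end

section
/- The three points of pairwise intersection among suitably reordered edges of a regular 7-gon exist: with unit vectors at angles 2πk/7, the ordering taking every 3rd vector (k = 0, 3, 6, 2 mod 7) produces four consecutive unit edges at angles 0, 6π/7, 12π/7, 4π/7 (relative rotation 6π/7 each step) such that edge 3 crosses edge 1, edge 4 crosses edge 2, and edge 4 crosses edge 1. -/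
open Real

theorem stmt_17 :
    let φ : ℝ := 6 * π / 7
    let P0 : ℝ × ℝ := (0, 0)
    let P1 : ℝ × ℝ := (1, 0)
    let P2 : ℝ × ℝ := P1 + (Real.cos φ, Real.sin φ)
    let P3 : ℝ × ℝ := P2 + (Real.cos (2 * φ), Real.sin (2 * φ))
    let P4 : ℝ × ℝ := P3 + (Real.cos (3 * φ), Real.sin (3 * φ))
    (openSegment ℝ P2 P3 ∩ openSegment ℝ P0 P1).Nonempty ∧
    (openSegment ℝ P3 P4 ∩ openSegment ℝ P1 P2).Nonempty ∧
    (openSegment ℝ P3 P4 ∩ openSegment ℝ P0 P1).Nonempty := by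
  intro φ P0 P1 P2 P3 P4
  set c : ℝ := Real.cos (π / 7) with hc
  set s : ℝ := Real.sin (π / 7) with hs
  have hπ := Real.pi_pos
  have hcos : Real.cos φ = -c := by
    show Real.cos (6 * π / 7) = -c
    rw [show (6 : ℝ) * π / 7 = π - π / 7 by ring, Real.cos_pi_sub]
  have hsin : Real.sin φ = s := by
    show Real.sin (6 * π / 7) = s
    rw [show (6 : ℝ) * π / 7 = π - π / 7 by ring, Real.sin_pi_sub]
  have hcos2 : Real.cos (2 * φ) = 2 * c ^ 2 - 1 := by
    rw [Real.cos_two_mul, hcos]; ring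
  have hsin2 : Real.sin (2 * φ) = -(2 * s * c) := by
    rw [Real.sin_two_mul, hcos, hsin]; ring
  have hcos3 : Real.cos (3 * φ) = -(4 * c ^ 3) + 3 * c := by
    rw [Real.cos_three_mul, hcos]; ring
  have hsin3 : Real.sin (3 * φ) = 3 * s - 4 * s ^ 3 := by
    rw [Real.sin_three_mul, hsin]
  have hpy : s ^ 2 = 1 - c ^ 2 := by
    have := Real.sin_sq_add_cos_sq (π / 7)
    rw [← hc, ← hs] at this; linarith
  have hchalf : 1 / 2 < c := by
    have h := Real.cos_lt_cos_of_nonneg_of_le_pi (x := π / 7) (y := π / 3)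
      (by positivity) (by linarith) (by linarith)
    rw [Real.cos_pi_div_three] at h
    linarith
  have hc0 : 0 < c := by linarith
  have h2c : (0 : ℝ) < 2 * c := by linarith
  have h2c1 : (0 : ℝ) < 2 * c + 1 := by linarith
  have hcne : c ≠ 0 := ne_of_gt hc0
  have hc0' : (2 : ℝ) * c ≠ 0 := ne_of_gt h2c
  have hc1' : (2 : ℝ) * c + 1 ≠ 0 := ne_of_gt h2c1
  have ha1 : (0 : ℝ) < 1 - 1 / (2 * c) := by
    rw [sub_pos, div_lt_one h2c]; linarith
  have hb1 : (0 : ℝ) < 1 / (2 * c) := by positivity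
  have ha2 : (0 : ℝ) < 2 * c / (2 * c + 1) := div_pos h2c h2c1
  have hb2 : (0 : ℝ) < 1 / (2 * c + 1) := by positivity
  have hsum2 : 2 * c / (2 * c + 1) + 1 / (2 * c + 1) = 1 := by
    rw [← add_div]
    exact div_self hc1'
  have hP2 : P2 = (1 - c, s) := by
    show ((1 : ℝ), (0 : ℝ)) + (Real.cos φ, Real.sin φ) = _
    rw [hcos, hsin, Prod.mk_add_mk, Prod.mk.injEq]
    constructor <;> ring
  have hP3 : P3 = (2 * c ^ 2 - c, s - 2 * s * c) := by
    show P2 + (Real.cos (2 * φ), Real.sin (2 * φ)) = _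
    rw [hP2, hcos2, hsin2, Prod.mk_add_mk, Prod.mk.injEq]
    constructor <;> ring
  have hP4 : P4 = (2 * c ^ 2 - c + (-(4 * c ^ 3) + 3 * c),
      s - 2 * s * c + (3 * s - 4 * s ^ 3)) := by
    show P3 + (Real.cos (3 * φ), Real.sin (3 * φ)) = _
    rw [hP3, hcos3, hsin3, Prod.mk_add_mk]
  have hP0 : P0 = ((0 : ℝ), (0 : ℝ)) := rfl
  have hP1 : P1 = ((1 : ℝ), (0 : ℝ)) := rfl
  refine ⟨⟨(1 - 1 / (2 * c), 0), ?_, ?_⟩,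
          ⟨(3 / 2 - c, s * (2 * c - 1) / (2 * c)), ?_, ?_⟩,
          ⟨(2 * c / (2 * c + 1), 0), ?_, ?_⟩⟩
  · -- (1 - 1/(2c), 0) ∈ openSegment P2 P3
    refine ⟨1 - 1 / (2 * c), 1 / (2 * c), ha1, hb1, by ring, ?_⟩
    simp only [hP2, hP3, Prod.smul_mk, smul_eq_mul, Prod.mk_add_mk, Prod.mk.injEq]
    constructor <;> · field_simp; ring
  · -- (1 - 1/(2c), 0) ∈ openSegment P0 P1
    refine ⟨1 / (2 * c), 1 - 1 / (2 * c), hb1, ha1, by ring, ?_⟩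
    simp only [hP0, hP1, Prod.smul_mk, smul_eq_mul, Prod.mk_add_mk, Prod.mk.injEq]
    constructor <;> ring
  · -- (3/2 - c, s(2c-1)/(2c)) ∈ openSegment P3 P4
    refine ⟨1 - 1 / (2 * c), 1 / (2 * c), ha1, hb1, by ring, ?_⟩
    simp only [hP3, hP4, Prod.smul_mk, smul_eq_mul, Prod.mk_add_mk, Prod.mk.injEq]
    constructor
    · field_simp; ring
    · field_simp; linear_combination (-(4 * s)) * hpy
  · -- (3/2 - c, s(2c-1)/(2c)) ∈ openSegment P1 P2
    refine ⟨1 / (2 * c), 1 - 1 / (2 * c), hb1, ha1, by ring, ?_⟩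
    simp only [hP1, hP2, Prod.smul_mk, smul_eq_mul, Prod.mk_add_mk, Prod.mk.injEq]
    constructor <;> · field_simp; ring
  · -- (2c/(2c+1), 0) ∈ openSegment P3 P4
    refine ⟨2 * c / (2 * c + 1), 1 / (2 * c + 1), ha2, hb2, hsum2, ?_⟩
    simp only [hP3, hP4, Prod.smul_mk, smul_eq_mul, Prod.mk_add_mk, Prod.mk.injEq]
    constructor
    · field_simp; ring
    · field_simp; linear_combination (-(4 * s)) * hpy
  · -- (2c/(2c+1), 0) ∈ openSegment P0 P1
    refine ⟨1 / (2 * c + 1), 2 * c / (2 * c + 1), hb2, ha2, by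
        rw [add_comm]; exact hsum2, ?_⟩
    simp only [hP0, hP1, Prod.smul_mk, smul_eq_mul, Prod.mk_add_mk, Prod.mk.injEq]
    constructor <;> ring
end
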